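/- Let f : 2^E → ℝ≥0 be proportionally submodular. Then for any two disjoint sets A, B ⊆ E with |A| = a ≥ 1 and |B| = b ≥ 1, Σ_{e ∈ B} (f(A ∪ {e}) − f(A)) ≥ (3a(1+a) / (3a² + 3ab + b² − 1)) · (f(A ∪ B) − f(A)). -/

import Mathlib

open Finset

/-- `f` is proportionally submodular. -/
def PropSubmodular {E : Type*} [DecidableEq E] (f : Finset E → ℝ) : Prop :=
  ∀ S T : Finset E,
    (S.card : ℝ) * f T + (T.card : ℝ) * f S ≥
      ((S ∩ T).card : ℝ) * f (S ∪ T) + ((S ∪ T).card : ℝ) * f (S ∩ T)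


lemma sum_insert_pc {E : Type*} [DecidableEq E] (B : Finset E) (k : ℕ) (g : Finset E → ℝ) :
    ∑ Z ∈ B.powersetCard k, ∑ u ∈ B \ Z, g (insert u Z)
      = ((k : ℝ) + 1) * ∑ X ∈ B.powersetCard (k + 1), g X := by
  have hrhs : ((k : ℝ) + 1) * ∑ X ∈ B.powersetCard (k + 1), g X
      = ∑ X ∈ B.powersetCard (k + 1), ∑ _u ∈ X, g X := by
    rw [Finset.mul_sum]
    refine Finset.sum_congr rfl fun X hX => ?_
    rw [Finset.sum_const, (Finset.mem_powersetCard.mp hX).2, nsmul_eq_mul]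
    push_cast; ring
  rw [hrhs, Finset.sum_sigma', Finset.sum_sigma']
  refine Finset.sum_nbij' (fun p => ⟨insert p.2 p.1, p.2⟩) (fun q => ⟨q.1.erase q.2, q.2⟩)
    ?_ ?_ ?_ ?_ ?_
  · rintro ⟨Z, u⟩ hp
    rw [Finset.mem_sigma] at hp ⊢
    obtain ⟨hZ, hu⟩ := hp
    obtain ⟨hZB, hZc⟩ := Finset.mem_powersetCard.mp hZ
    obtain ⟨huB, huZ⟩ := Finset.mem_sdiff.mp hu
    refine ⟨Finset.mem_powersetCard.mpr ⟨Finset.insert_subset huB hZB, ?_⟩, Finset.mem_insert_self _ _⟩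
    rw [Finset.card_insert_of_notMem huZ, hZc]
  · rintro ⟨X, u⟩ hq
    rw [Finset.mem_sigma] at hq ⊢
    obtain ⟨hX, hu⟩ := hq
    obtain ⟨hXB, hXc⟩ := Finset.mem_powersetCard.mp hX
    refine ⟨Finset.mem_powersetCard.mpr ⟨(Finset.erase_subset _ _).trans hXB, ?_⟩, ?_⟩
    · rw [Finset.card_erase_of_mem hu, hXc]; omega
    · exact Finset.mem_sdiff.mpr ⟨hXB hu, Finset.notMem_erase _ _⟩
  · rintro ⟨Z, u⟩ hp
    rw [Finset.mem_sigma] at hp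
    obtain ⟨_, hu⟩ := hp
    obtain ⟨-, huZ⟩ := Finset.mem_sdiff.mp hu
    simp [Finset.erase_insert huZ]
  · rintro ⟨X, u⟩ hq
    rw [Finset.mem_sigma] at hq
    simp [Finset.insert_erase hq.2]
  · rintro ⟨Z, u⟩ _
    rfl

lemma star_lemma {E : Type*} [DecidableEq E] (f : Finset E → ℝ) (hps : PropSubmodular f)
    (A B : Finset E) (a b j t : ℕ) (ha : A.card = a) (hb : B.card = b)
    (hAB : Disjoint A B) (ht : b = j + 2 + t) :
    ((a : ℝ) + j) * (((j : ℝ) + 1) * (((j : ℝ) + 2) * ∑ X ∈ B.powersetCard (j + 2), f (A ∪ X)))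
      + ((a : ℝ) + j + 2) * (((t : ℝ) + 2) * (((t : ℝ) + 1) * ∑ X ∈ B.powersetCard j, f (A ∪ X)))
    ≤ 2 * ((a : ℝ) + j + 1)
        * (((t : ℝ) + 1) * (((j : ℝ) + 1) * ∑ X ∈ B.powersetCard (j + 1), f (A ∪ X))) := by
  -- facts about members
  have hcardAX : ∀ X : Finset E, X ⊆ B → (A ∪ X).card = a + X.card := by
    intro X hXB
    rw [Finset.card_union_of_disjoint (hAB.mono_right hXB), ha]
  -- pointwise inequality
  have key : ∀ Z ∈ B.powersetCard j, ∀ u ∈ B \ Z, ∀ v ∈ B \ insert u Z,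
      ((a : ℝ) + j) * f (A ∪ insert v (insert u Z)) + ((a : ℝ) + j + 2) * f (A ∪ Z)
        ≤ ((a : ℝ) + j + 1) * (f (A ∪ insert v Z) + f (A ∪ insert u Z)) := by
    intro Z hZ u hu v hv
    obtain ⟨hZB, hZc⟩ := Finset.mem_powersetCard.mp hZ
    obtain ⟨huB, huZ⟩ := Finset.mem_sdiff.mp hu
    obtain ⟨hvB, hvuZ⟩ := Finset.mem_sdiff.mp hv
    have hvu : v ≠ u := fun h => hvuZ (h ▸ Finset.mem_insert_self _ _)
    have hvZ : v ∉ Z := fun h => hvuZ (Finset.mem_insert_of_mem h)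
    have huZB : insert u Z ⊆ B := Finset.insert_subset huB hZB
    have hvZB : insert v Z ⊆ B := Finset.insert_subset hvB hZB
    have hvuZB : insert v (insert u Z) ⊆ B := Finset.insert_subset hvB huZB
    have hiU : (A ∪ insert u Z) ∪ (A ∪ insert v Z) = A ∪ insert v (insert u Z) := by
      ext x
      simp only [Finset.mem_union, Finset.mem_insert]
      tauto
    have hiI : (A ∪ insert u Z) ∩ (A ∪ insert v Z) = A ∪ Z := by
      ext x
      simp only [Finset.mem_inter, Finset.mem_union, Finset.mem_insert]
      constructor
      · rintro ⟨hA | (rfl | hx), hA' | (h' | hx')⟩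
        · exact Or.inl hA
        · exact Or.inl hA
        · exact Or.inl hA
        · exact Or.inl hA'
        · exact absurd h'.symm hvu
        · exact Or.inr hx'
        · exact Or.inl hA'
        · exact Or.inr hx
        · exact Or.inr hx
      · rintro (hA | hx)
        · exact ⟨Or.inl hA, Or.inl hA⟩
        · exact ⟨Or.inr (Or.inr hx), Or.inr (Or.inr hx)⟩
    have h1 := hps (A ∪ insert u Z) (A ∪ insert v Z)
    rw [hiU, hiI] at h1
    rw [hcardAX _ huZB, hcardAX _ hvZB, hcardAX _ hvuZB, hcardAX _ hZB] at h1
    rw [Finset.card_insert_of_notMem huZ, hZc] at h1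
    rw [Finset.card_insert_of_notMem hvZ, hZc] at h1
    rw [Finset.card_insert_of_notMem (by simp [hvu, hvZ]), Finset.card_insert_of_notMem huZ,
      hZc] at h1
    push_cast at h1
    linarith
  -- aggregate
  have agg : ∑ Z ∈ B.powersetCard j, ∑ u ∈ B \ Z, ∑ v ∈ B \ insert u Z,
        (((a : ℝ) + j) * f (A ∪ insert v (insert u Z)) + ((a : ℝ) + j + 2) * f (A ∪ Z))
      ≤ ∑ Z ∈ B.powersetCard j, ∑ u ∈ B \ Z, ∑ v ∈ B \ insert u Z,
        (((a : ℝ) + j + 1) * (f (A ∪ insert v Z) + f (A ∪ insert u Z))) := by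
    refine Finset.sum_le_sum fun Z hZ => Finset.sum_le_sum fun u hu => Finset.sum_le_sum
      fun v hv => key Z hZ u hu v hv
  have hcard2 : ∀ Z ∈ B.powersetCard j, ∀ u ∈ B \ Z, (B \ insert u Z).card = t + 1 := by
    intro Z hZ u hu
    obtain ⟨hZB, hZc⟩ := Finset.mem_powersetCard.mp hZ
    obtain ⟨huB, huZ⟩ := Finset.mem_sdiff.mp hu
    rw [Finset.card_sdiff_of_subset (Finset.insert_subset huB hZB), hb,
      Finset.card_insert_of_notMem huZ, hZc]
    omega
  have hcard1 : ∀ Z ∈ B.powersetCard j, (B \ Z).card = t + 2 := by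
    intro Z hZ
    obtain ⟨hZB, hZc⟩ := Finset.mem_powersetCard.mp hZ
    rw [Finset.card_sdiff_of_subset hZB, hb, hZc]
    omega
  -- T3 : triple sum of f (A ∪ insert v (insert u Z))
  have hT3 : ∑ Z ∈ B.powersetCard j, ∑ u ∈ B \ Z, ∑ v ∈ B \ insert u Z,
        f (A ∪ insert v (insert u Z))
      = ((j : ℝ) + 1) * (((j : ℝ) + 2) * ∑ X ∈ B.powersetCard (j + 2), f (A ∪ X)) := by
    have h1 := sum_insert_pc B j (fun X => ∑ v ∈ B \ X, f (A ∪ insert v X))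
    rw [h1, sum_insert_pc B (j + 1) (fun X => f (A ∪ X))]
    push_cast; ring
  -- T4 : triple sum of f (A ∪ Z)
  have hT4 : ∑ Z ∈ B.powersetCard j, ∑ u ∈ B \ Z, ∑ v ∈ B \ insert u Z, f (A ∪ Z)
      = ((t : ℝ) + 2) * (((t : ℝ) + 1) * ∑ X ∈ B.powersetCard j, f (A ∪ X)) := by
    rw [Finset.mul_sum, Finset.mul_sum]
    refine Finset.sum_congr rfl fun Z hZ => ?_
    have : ∀ u ∈ B \ Z, ∑ v ∈ B \ insert u Z, f (A ∪ Z) = ((t : ℝ) + 1) * f (A ∪ Z) := by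
      intro u hu
      rw [Finset.sum_const, hcard2 Z hZ u hu, nsmul_eq_mul]
      push_cast; ring
    rw [Finset.sum_congr rfl this, Finset.sum_const, hcard1 Z hZ, nsmul_eq_mul]
    push_cast; ring
  -- T1 : triple sum of f (A ∪ insert u Z)
  have hT1 : ∑ Z ∈ B.powersetCard j, ∑ u ∈ B \ Z, ∑ v ∈ B \ insert u Z, f (A ∪ insert u Z)
      = ((t : ℝ) + 1) * (((j : ℝ) + 1) * ∑ X ∈ B.powersetCard (j + 1), f (A ∪ X)) := by
    have hstep : ∀ Z ∈ B.powersetCard j, ∑ u ∈ B \ Z, ∑ v ∈ B \ insert u Z, f (A ∪ insert u Z)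
        = ∑ u ∈ B \ Z, ((t : ℝ) + 1) * f (A ∪ insert u Z) := by
      intro Z hZ
      refine Finset.sum_congr rfl fun u hu => ?_
      rw [Finset.sum_const, hcard2 Z hZ u hu, nsmul_eq_mul]
      push_cast; ring
    rw [Finset.sum_congr rfl hstep]
    simp only [← Finset.mul_sum]
    rw [sum_insert_pc B j (fun X => f (A ∪ X))]
  -- T2 : triple sum of f (A ∪ insert v Z)
  have hT2 : ∑ Z ∈ B.powersetCard j, ∑ u ∈ B \ Z, ∑ v ∈ B \ insert u Z, f (A ∪ insert v Z)
      = ((t : ℝ) + 1) * (((j : ℝ) + 1) * ∑ X ∈ B.powersetCard (j + 1), f (A ∪ X)) := by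
    have hstep : ∀ Z ∈ B.powersetCard j, ∑ u ∈ B \ Z, ∑ v ∈ B \ insert u Z, f (A ∪ insert v Z)
        = ((t : ℝ) + 1) * ∑ v ∈ B \ Z, f (A ∪ insert v Z) := by
      intro Z hZ
      have hin : ∀ u ∈ B \ Z, ∑ v ∈ B \ insert u Z, f (A ∪ insert v Z)
          = (∑ v ∈ B \ Z, f (A ∪ insert v Z)) - f (A ∪ insert u Z) := by
        intro u hu
        rw [Finset.sdiff_insert, Finset.sum_erase_eq_sub hu]
      rw [Finset.sum_congr rfl hin, Finset.sum_sub_distrib, Finset.sum_const, hcard1 Z hZ,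
        nsmul_eq_mul]
      push_cast; ring
    rw [Finset.sum_congr rfl hstep, ← Finset.mul_sum,
      sum_insert_pc B j (fun X => f (A ∪ X))]
  -- combine
  have hsplitL : ∑ Z ∈ B.powersetCard j, ∑ u ∈ B \ Z, ∑ v ∈ B \ insert u Z,
        (((a : ℝ) + j) * f (A ∪ insert v (insert u Z)) + ((a : ℝ) + j + 2) * f (A ∪ Z))
      = ((a : ℝ) + j) * (∑ Z ∈ B.powersetCard j, ∑ u ∈ B \ Z, ∑ v ∈ B \ insert u Z,
            f (A ∪ insert v (insert u Z)))
        + ((a : ℝ) + j + 2) * (∑ Z ∈ B.powersetCard j, ∑ u ∈ B \ Z, ∑ v ∈ B \ insert u Z,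
            f (A ∪ Z)) := by
    simp only [Finset.sum_add_distrib, Finset.mul_sum]
  have hsplitR : ∑ Z ∈ B.powersetCard j, ∑ u ∈ B \ Z, ∑ v ∈ B \ insert u Z,
        (((a : ℝ) + j + 1) * (f (A ∪ insert v Z) + f (A ∪ insert u Z)))
      = ((a : ℝ) + j + 1) * (∑ Z ∈ B.powersetCard j, ∑ u ∈ B \ Z, ∑ v ∈ B \ insert u Z,
            f (A ∪ insert v Z))
        + ((a : ℝ) + j + 1) * (∑ Z ∈ B.powersetCard j, ∑ u ∈ B \ Z, ∑ v ∈ B \ insert u Z,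
            f (A ∪ insert u Z)) := by
    simp only [mul_add, Finset.sum_add_distrib, Finset.mul_sum]
  rw [hsplitL, hsplitR, hT1, hT2, hT3, hT4] at agg
  linarith

lemma sum_quad (c : ℝ) : ∀ n : ℕ, ∑ j ∈ Finset.range n, ((c + j + 1) * (c + j))
    = n * (3 * c ^ 2 + 3 * c * n + n ^ 2 - 1) / 3
  | 0 => by simp
  | (n + 1) => by
      rw [Finset.sum_range_succ, sum_quad c n]
      push_cast
      ring

lemma chain_lemma (a b : ℕ) (ha1 : 1 ≤ a) (hb1 : 1 ≤ b) (Sg C : ℕ → ℝ)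
    (hC : ∀ k, k ≤ b → 0 < C k)
    (hrec1 : ∀ j, j + 1 ≤ b → C j * ((b : ℝ) - j) = C (j + 1) * ((j : ℝ) + 1))
    (hstar : ∀ j, j + 2 ≤ b →
      ((a : ℝ) + j) * (((j : ℝ) + 1) * (((j : ℝ) + 2) * Sg (j + 2)))
        + ((a : ℝ) + j + 2) * (((b : ℝ) - j) * (((b : ℝ) - j - 1) * Sg j))
      ≤ 2 * ((a : ℝ) + j + 1) * (((b : ℝ) - j - 1) * (((j : ℝ) + 1) * Sg (j + 1)))) :
    3 * (a : ℝ) * (1 + (a : ℝ)) / (3 * (a : ℝ) ^ 2 + 3 * (a : ℝ) * (b : ℝ) + (b : ℝ) ^ 2 - 1)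
        * (Sg b / C b - Sg 0 / C 0)
      ≤ (b : ℝ) * (Sg 1 / C 1 - Sg 0 / C 0) := by
  have ha1' : (1 : ℝ) ≤ (a : ℝ) := by exact_mod_cast ha1
  have hb1' : (1 : ℝ) ≤ (b : ℝ) := by exact_mod_cast hb1
  obtain ⟨h, hh⟩ : ∃ h : ℕ → ℝ, ∀ k, h k = Sg k / C k := ⟨_, fun _ => rfl⟩
  rw [← hh b, ← hh 1, ← hh 0]
  have hS : ∀ k, k ≤ b → Sg k = C k * h k := by
    intro k hk
    have hne := (hC k hk).ne'
    rw [hh k]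
    field_simp
  have hstarh : ∀ j, j + 2 ≤ b →
      ((a : ℝ) + j) * h (j + 2) + ((a : ℝ) + j + 2) * h j
        ≤ 2 * ((a : ℝ) + j + 1) * h (j + 1) := by
    intro j hj
    have hC2 := hC (j + 1) (by omega)
    have hq : (0 : ℝ) < (b : ℝ) - j - 1 := by
      have : ((j : ℝ) + 2) ≤ (b : ℝ) := by exact_mod_cast hj
      linarith
    have e1 := hrec1 j (by omega)
    have e2 := hrec1 (j + 1) (by omega)
    simp only [show j + 1 + 1 = j + 2 from by omega] at e2
    push_cast at e2
    have hs := hstar j hj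
    rw [hS j (by omega), hS (j + 1) (by omega), hS (j + 2) (by omega)] at hs
    have hlam : (0 : ℝ) < ((j : ℝ) + 1) * (((b : ℝ) - j - 1) * C (j + 1)) := by positivity
    refine le_of_mul_le_mul_right ?_ hlam
    calc (((a : ℝ) + j) * h (j + 2) + ((a : ℝ) + j + 2) * h j)
          * (((j : ℝ) + 1) * (((b : ℝ) - j - 1) * C (j + 1)))
        = ((a : ℝ) + j) * (((j : ℝ) + 1) * (((j : ℝ) + 2) * (C (j + 2) * h (j + 2))))
            + ((a : ℝ) + j + 2) * (((b : ℝ) - j) * (((b : ℝ) - j - 1) * (C j * h j))) := by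
          linear_combination (((a : ℝ) + j) * (((j : ℝ) + 1) * h (j + 2))) * e2
            - (((a : ℝ) + j + 2) * (((b : ℝ) - j - 1) * h j)) * e1
      _ ≤ 2 * ((a : ℝ) + j + 1) * (((b : ℝ) - j - 1) * (((j : ℝ) + 1) * (C (j + 1) * h (j + 1)))) := hs
      _ = 2 * ((a : ℝ) + j + 1) * h (j + 1)
            * (((j : ℝ) + 1) * (((b : ℝ) - j - 1) * C (j + 1))) := by ring
  -- induction on the increments
  have hd : ∀ j, j + 1 ≤ b →
      (a : ℝ) * ((a : ℝ) + 1) * (h (j + 1) - h j)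
        ≤ ((a : ℝ) + j + 1) * (((a : ℝ) + j) * (h 1 - h 0)) := by
    intro j
    induction j with
    | zero =>
        intro _
        apply le_of_eq
        push_cast
        ring
    | succ i ih =>
        intro hle
        have hs := hstarh i (by omega)
        have ihh := ih (by omega)
        have hi0 : (0 : ℝ) ≤ (i : ℝ) := Nat.cast_nonneg i
        have hpos : (0 : ℝ) < (a : ℝ) + i := by linarith
        have h1' : ((a : ℝ) + i) * (h (i + 2) - h (i + 1))
            ≤ ((a : ℝ) + i + 2) * (h (i + 1) - h i) := by nlinarith [hs]
        have X1 := mul_le_mul_of_nonneg_left h1'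
          (by positivity : (0 : ℝ) ≤ (a : ℝ) * ((a : ℝ) + 1))
        have X2 := mul_le_mul_of_nonneg_left ihh
          (by linarith : (0 : ℝ) ≤ (a : ℝ) + (i : ℝ) + 2)
        refine le_of_mul_le_mul_left ?_ hpos
        simp only [show i + 1 + 1 = i + 2 from by omega]
        push_cast
        nlinarith [X1, X2]
  have tele : ∑ j ∈ Finset.range b, (h (j + 1) - h j) = h b - h 0 := Finset.sum_range_sub h b
  have hsum : (a : ℝ) * ((a : ℝ) + 1) * (h b - h 0)
      ≤ (∑ j ∈ Finset.range b, (((a : ℝ) + j + 1) * ((a : ℝ) + j))) * (h 1 - h 0) := by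
    rw [← tele, Finset.mul_sum, Finset.sum_mul]
    refine Finset.sum_le_sum fun j hj => ?_
    have := hd j (Finset.mem_range.mp hj)
    nlinarith [this]
  rw [sum_quad ((a : ℝ)) b] at hsum
  have hD : (0 : ℝ) < 3 * (a : ℝ) ^ 2 + 3 * (a : ℝ) * (b : ℝ) + (b : ℝ) ^ 2 - 1 := by nlinarith
  rw [div_mul_eq_mul_div, div_le_iff₀ hD]
  nlinarith [hsum]


theorem stmt_4 {E : Type*} [Fintype E] [DecidableEq E]
    (f : Finset E → ℝ) (hnn : ∀ S, 0 ≤ f S) (hps : PropSubmodular f)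
    (A B : Finset E) (a b : ℕ) (ha : A.card = a) (hb : B.card = b)
    (ha1 : 1 ≤ a) (hb1 : 1 ≤ b) (hAB : Disjoint A B) :
    ∑ e ∈ B, (f (insert e A) - f A) ≥
      (3 * (a : ℝ) * (1 + a) / (3 * (a : ℝ)^2 + 3 * a * b + (b : ℝ)^2 - 1))
        * (f (A ∪ B) - f A) := by
  have ha1' : (1 : ℝ) ≤ (a : ℝ) := by exact_mod_cast ha1
  have hb1' : (1 : ℝ) ≤ (b : ℝ) := by exact_mod_cast hb1
  have hbne : (b : ℝ) ≠ 0 := by linarith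
  have hC : ∀ k, k ≤ b → (0 : ℝ) < ((b.choose k : ℕ) : ℝ) := by
    intro k hk
    exact_mod_cast Nat.choose_pos hk
  have hrec1 : ∀ j, j + 1 ≤ b →
      ((b.choose j : ℕ) : ℝ) * ((b : ℝ) - j) = ((b.choose (j + 1) : ℕ) : ℝ) * ((j : ℝ) + 1) := by
    intro j hj
    have h1 : b.choose (j + 1) * (j + 1) = b.choose j * (b - j) := Nat.choose_succ_right_eq b j
    have hcast : ((b.choose (j + 1) * (j + 1) : ℕ) : ℝ) = ((b.choose j * (b - j) : ℕ) : ℝ) := by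
      exact_mod_cast h1
    push_cast [Nat.cast_sub (show j ≤ b by omega)] at hcast
    linarith
  have hstarb : ∀ j, j + 2 ≤ b →
      ((a : ℝ) + j) * (((j : ℝ) + 1) * (((j : ℝ) + 2) * ∑ X ∈ B.powersetCard (j + 2), f (A ∪ X)))
        + ((a : ℝ) + j + 2) * (((b : ℝ) - j) * (((b : ℝ) - j - 1)
            * ∑ X ∈ B.powersetCard j, f (A ∪ X)))
      ≤ 2 * ((a : ℝ) + j + 1) * (((b : ℝ) - j - 1) * (((j : ℝ) + 1)
            * ∑ X ∈ B.powersetCard (j + 1), f (A ∪ X))) := by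
    intro j hj
    obtain ⟨t, ht⟩ : ∃ t, b = j + 2 + t := ⟨b - (j + 2), by omega⟩
    have hs := star_lemma f hps A B a b j t ha hb hAB ht
    have hbr : (b : ℝ) = (j : ℝ) + 2 + (t : ℝ) := by exact_mod_cast ht
    have e1 : ((t : ℝ) + 1) = (b : ℝ) - j - 1 := by linarith
    have e2 : ((t : ℝ) + 2) = (b : ℝ) - j := by linarith
    rw [e1, e2] at hs
    exact hs
  have hchain := chain_lemma a b ha1 hb1 (fun k => ∑ X ∈ B.powersetCard k, f (A ∪ X))
    (fun k => ((b.choose k : ℕ) : ℝ)) hC hrec1 hstarb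
  rw [Nat.choose_self, Nat.choose_zero_right, Nat.choose_one_right] at hchain
  have hSb : ∑ X ∈ B.powersetCard b, f (A ∪ X) = f (A ∪ B) := by
    rw [← hb, Finset.powersetCard_self, Finset.sum_singleton]
  have hS0 : ∑ X ∈ B.powersetCard 0, f (A ∪ X) = f A := by
    rw [Finset.powersetCard_zero, Finset.sum_singleton, Finset.union_empty]
  have hS1 : ∑ X ∈ B.powersetCard 1, f (A ∪ X) = ∑ e ∈ B, f (insert e A) := by
    have h0 := sum_insert_pc B 0 (fun X => f (A ∪ X))
    simp only [Finset.powersetCard_zero, Finset.sum_singleton, Finset.sdiff_empty,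
      Nat.cast_zero, zero_add, one_mul] at h0
    rw [← h0]
    refine Finset.sum_congr rfl fun e he => ?_
    congr 1
    ext x
    simp only [Finset.mem_union, Finset.mem_insert, Finset.notMem_empty, or_false]
    tauto
  rw [hSb, hS0, hS1] at hchain
  simp only [Nat.cast_one, div_one] at hchain
  have hr : (b : ℝ) * ((∑ e ∈ B, f (insert e A)) / (b : ℝ) - f A)
      = (∑ e ∈ B, f (insert e A)) - (b : ℝ) * f A := by
    field_simp
  rw [hr] at hchain
  rw [ge_iff_le, Finset.sum_sub_distrib, Finset.sum_const, hb, nsmul_eq_mul]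
  exact hchain
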